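/- Let T ≥ 1, G > 0, ε_T ≥ 0, and let C ≥ 1 satisfy the Rademacher quadratic anticoncentration property for horizon T. Let a_1,…,a_T be a one-dimensional online algorithm over T rounds which guarantees that for every loss sequence g_1,…,g_T ∈ ℝ with |g_t| ≤ G for all t, its regret against the zero comparator satisfies ∑_{t=1}^T g_t·a_t(g_1,…,g_{t−1}) ≤ G·ε_T. Let A ∈ ℝ^{T×T} be symmetric positive definite and set B := A − Diag(A), with B ≠ 0. Then for every real q with 1 ≤ q ≤ ‖B‖_F/(C·√(2·max_{1≤i≤T} ∑_{j=1}^T B_{ij}²)), there exists a loss sequence g_1,…,g_T ∈ {−G, G} such that (g_1,…,g_T)ᵀ A (g_1,…,g_T) ≥ G²·(Tr(A) + q‖B‖_F) and ∑_{t=1}^T g_t·a_t(g_1,…,g_{t−1}) ≥ G·ε_T·(1 − 2^{4C²q²}). -/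

import Mathlib

open Matrix Finset

/-- The Frobenius norm `‖B‖_F := √(∑_{i,j} B_{ij}²)`. -/
noncomputable def frobNorm {T : ℕ} (B : Matrix (Fin T) (Fin T) ℝ) : ℝ :=
  Real.sqrt (∑ i : Fin T, ∑ j : Fin T, (B i j)^2)

/-- The sign vector associated with `ε : Fin T → Bool`. -/
def signVec {T : ℕ} (ε : Fin T → Bool) : Fin T → ℝ :=
  fun i => if ε i then 1 else -1

/-- `C ≥ 1` satisfies the **Rademacher quadratic anticoncentration property**
for horizon `T`: for every nonzero symmetric `B ∈ ℝ^{T×T}` with zero diagonal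
and every `1 ≤ q ≤ ‖B‖_F/(C√(2·max_i ∑_j B_{ij}²))`, independent uniform signs
`Y ∈ {−1,1}^T` satisfy `Pr(∑_{i,j} Y_iY_jB_{ij} ≥ q‖B‖_F) ≥ 2^{−4C²q²}`
(probability computed by uniform counting over `{−1,1}^T`). -/
noncomputable def RademacherAnticoncentration (T : ℕ) (C : ℝ) : Prop :=
  ∀ B : Matrix (Fin T) (Fin T) ℝ, B ≠ 0 → B.IsSymm → (∀ i, B i i = 0) →
    ∀ q : ℝ, 1 ≤ q →
      q ≤ frobNorm B /
            (C * Real.sqrt (2 * ⨆ i : Fin T, ∑ j : Fin T, (B i j)^2)) →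
      (2 : ℝ) ^ (-(4 * C^2 * q^2)) ≤
        ((Finset.univ.filter (fun ε : Fin T → Bool =>
            q * frobNorm B ≤
              ∑ i : Fin T, ∑ j : Fin T, signVec ε i * signVec ε j * B i j)).card : ℝ)
          / 2^T

/-- **Wealth lower bound (key lemma).**
Let `alg` be a one-dimensional online algorithm over `T` rounds (`alg t g`
plays round `t` using only `g_s`, `s < t`) with regret against the zero
comparator at most `G·ε_T` on all loss sequences bounded by `G`. For a
symmetric positive definite `A` with `B := A − Diag(A) ≠ 0`, and for every
`1 ≤ q ≤ ‖B‖_F/(C√(2·max_i ∑_j B_{ij}²))`, there is a loss sequence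
`g ∈ {−G,G}^T` with `gᵀAg ≥ G²(Tr(A) + q‖B‖_F)` and
`∑_t g_t·alg t g ≥ G·ε_T·(1 − 2^{4C²q²})`. -/
theorem wealth_lower_bound (T : ℕ) (hT : 1 ≤ T)
    (G εT C : ℝ) (hG : 0 < G) (hε : 0 ≤ εT) (hC : 1 ≤ C)
    (hanti : RademacherAnticoncentration T C)
    (alg : Fin T → (Fin T → ℝ) → ℝ)
    (hcausal : ∀ (t : Fin T) (g g' : Fin T → ℝ),
      (∀ s : Fin T, s < t → g s = g' s) → alg t g = alg t g')
    (hregret : ∀ g : Fin T → ℝ, (∀ t, |g t| ≤ G) →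
      ∑ t : Fin T, g t * alg t g ≤ G * εT)
    (A : Matrix (Fin T) (Fin T) ℝ) (hA : A.PosDef)
    (B : Matrix (Fin T) (Fin T) ℝ)
    (hB : B = A - Matrix.diagonal (fun i => A i i)) (hBne : B ≠ 0) :
    ∀ q : ℝ, 1 ≤ q →
      q ≤ frobNorm B /
            (C * Real.sqrt (2 * ⨆ i : Fin T, ∑ j : Fin T, (B i j)^2)) →
      ∃ g : Fin T → ℝ, (∀ t, g t = G ∨ g t = -G) ∧
        G^2 * (A.trace + q * frobNorm B) ≤ g ⬝ᵥ (A *ᵥ g) ∧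
        G * εT * (1 - (2 : ℝ) ^ (4 * C^2 * q^2)) ≤
          ∑ t : Fin T, g t * alg t g := by
  intro q hq1 hq2
  classical
  set gv : (Fin T → Bool) → (Fin T → ℝ) := fun ε i => G * signVec ε i with hgv
  set S : (Fin T → Bool) → ℝ := fun ε => ∑ t : Fin T, gv ε t * alg t (gv ε) with hSdef
  -- symmetry of A
  have hAs : ∀ i j, A j i = A i j := by
    intro i j
    have := congrFun (congrFun hA.isHermitian.eq j) i
    simpa [Matrix.conjTranspose_apply, eq_comm] using this
  have hBdiag : ∀ i, B i i = 0 := by intro i; simp [hB]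
  have hBsymm : B.IsSymm := by
    rw [Matrix.IsSymm]
    ext i j
    simp only [Matrix.transpose_apply, hB, Matrix.sub_apply, Matrix.diagonal_apply]
    rw [hAs i j]
    congr 1
    by_cases h : i = j
    · subst h; simp
    · simp [h, Ne.symm h]
  -- sign facts
  have hsq : ∀ (ε : Fin T → Bool) i, signVec ε i ^ 2 = 1 := by
    intro ε i; unfold signVec; cases ε i <;> norm_num
  have habs : ∀ (ε : Fin T → Bool) t, |gv ε t| ≤ G := by
    intro ε t
    simp only [hgv]
    unfold signVec; cases ε t <;> simp [abs_of_pos hG, abs_of_nonneg hG.le, hG.le]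
  -- regret bound for each sign pattern
  have hSle : ∀ ε, S ε ≤ G * εT := fun ε => hregret (gv ε) (habs ε)
  -- zero mean
  have hzero : ∑ ε : Fin T → Bool, S ε = 0 := by
    rw [hSdef]
    rw [Finset.sum_comm]
    refine Finset.sum_eq_zero fun t _ => ?_
    have hinv : Function.Involutive
        (fun ε : Fin T → Bool => Function.update ε t (!ε t)) := by
      intro ε; funext s
      by_cases h : s = t
      · subst h; simp
      · simp [Function.update_of_ne h]
    set f : (Fin T → Bool) → ℝ := fun ε => gv ε t * alg t (gv ε) with hf
    have hflip : ∀ ε, f (Function.update ε t (!ε t)) = -(f ε) := by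
      intro ε
      have h1 : alg t (gv (Function.update ε t (!ε t))) = alg t (gv ε) := by
        apply hcausal
        intro s hs
        simp [hgv, signVec, Function.update_of_ne (ne_of_lt hs)]
      have h2 : gv (Function.update ε t (!ε t)) t = -(gv ε t) := by
        simp only [hgv]
        unfold signVec
        rw [Function.update_self]
        cases ε t <;> norm_num
      simp only [hf, h1, h2]; ring
    have hcomp : ∑ ε : Fin T → Bool, f (Function.update ε t (!ε t))
        = ∑ ε : Fin T → Bool, f ε :=
      Fintype.sum_equiv (Function.Involutive.toPerm _ hinv)
        (fun ε => f (Function.update ε t (!ε t))) f (fun ε => rfl)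
    have : ∑ ε : Fin T → Bool, -(f ε) = ∑ ε : Fin T → Bool, f ε := by
      rw [← hcomp]; exact Finset.sum_congr rfl fun ε _ => (hflip ε).symm
    rw [Finset.sum_neg_distrib] at this
    linarith
  -- anticoncentration
  have hcard := hanti B hBne hBsymm hBdiag q hq1 hq2
  set E := Finset.univ.filter (fun ε : Fin T → Bool =>
      q * frobNorm B ≤
        ∑ i : Fin T, ∑ j : Fin T, signVec ε i * signVec ε j * B i j) with hE
  set x : ℝ := 4 * C^2 * q^2 with hx
  have h2xpos : (0:ℝ) < (2:ℝ) ^ x := Real.rpow_pos_of_pos (by norm_num) x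
  have h2Tpos : (0:ℝ) < (2:ℝ) ^ T := by positivity
  have hn : (2:ℝ)^(-x) * (2:ℝ)^T ≤ (E.card : ℝ) := (le_div_iff₀ h2Tpos).mp hcard
  have hnpos : (0:ℝ) < (E.card : ℝ) := by
    refine lt_of_lt_of_le ?_ hn
    positivity
  have h2Tn : (2:ℝ)^T ≤ (E.card : ℝ) * (2:ℝ)^x := by
    have hinv2 : (2:ℝ)^(-x) = ((2:ℝ)^x)⁻¹ := Real.rpow_neg (by norm_num) x
    rw [hinv2] at hn
    rw [← div_le_iff₀ h2xpos, div_eq_inv_mul]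
    exact hn
  -- pick the maximizer of S on E
  have hEne : E.Nonempty := by
    rw [← Finset.card_pos]
    exact_mod_cast hnpos
  obtain ⟨ε₀, hε₀E, hmax⟩ := E.exists_max_image S hEne
  -- sum over E bounded by card * max
  have hsumE : ∑ ε ∈ E, S ε ≤ (E.card : ℝ) * S ε₀ := by
    calc ∑ ε ∈ E, S ε ≤ ∑ _ε ∈ E, S ε₀ := Finset.sum_le_sum fun ε hε => hmax ε hε
    _ = (E.card : ℝ) * S ε₀ := by rw [Finset.sum_const, nsmul_eq_mul]
  -- sum over complement bounded by (2^T - card) * GεT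
  have hcardcompl : ((Finset.univ.filter (fun ε : Fin T → Bool =>
      ¬ (q * frobNorm B ≤
        ∑ i : Fin T, ∑ j : Fin T, signVec ε i * signVec ε j * B i j))).card : ℝ)
      = (2:ℝ)^T - (E.card : ℝ) := by
    have h := Finset.card_filter_add_card_filter_not (s := (Finset.univ : Finset (Fin T → Bool)))
      (p := fun ε : Fin T → Bool =>
        q * frobNorm B ≤ ∑ i : Fin T, ∑ j : Fin T, signVec ε i * signVec ε j * B i j)
    have hcardU : (Finset.univ : Finset (Fin T → Bool)).card = 2^T := by
      simp [Finset.card_univ]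
    rw [hcardU] at h
    have h2 := congrArg (fun n : ℕ => (n : ℝ)) h
    push_cast at h2
    linarith
  have hsplit : ∑ ε ∈ E, S ε + ∑ ε ∈ Finset.univ.filter (fun ε : Fin T → Bool =>
      ¬ (q * frobNorm B ≤
        ∑ i : Fin T, ∑ j : Fin T, signVec ε i * signVec ε j * B i j)), S ε = 0 := by
    rw [Finset.sum_filter_add_sum_filter_not]
    exact hzero
  have hsumC : ∑ ε ∈ Finset.univ.filter (fun ε : Fin T → Bool =>
      ¬ (q * frobNorm B ≤
        ∑ i : Fin T, ∑ j : Fin T, signVec ε i * signVec ε j * B i j)), S ε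
      ≤ ((2:ℝ)^T - (E.card : ℝ)) * (G * εT) := by
    rw [← hcardcompl]
    calc _ ≤ ∑ _ε ∈ Finset.univ.filter (fun ε : Fin T → Bool =>
        ¬ (q * frobNorm B ≤
          ∑ i : Fin T, ∑ j : Fin T, signVec ε i * signVec ε j * B i j)), (G * εT) :=
          Finset.sum_le_sum fun ε _ => hSle ε
    _ = _ := by rw [Finset.sum_const, nsmul_eq_mul]
  -- key lower bound on S ε₀
  have hSlb : G * εT * (1 - (2:ℝ) ^ x) ≤ S ε₀ := by
    have h1 : ((E.card : ℝ)) * S ε₀ ≥ ((E.card : ℝ) - (2:ℝ)^T) * (G * εT) := by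
      nlinarith [hsumE, hsumC, hsplit]
    have hGε : 0 ≤ G * εT := mul_nonneg hG.le hε
    have h2 : (E.card : ℝ) * (G * εT * (1 - (2:ℝ)^x)) ≤ (E.card : ℝ) * S ε₀ := by
      refine le_trans ?_ h1
      have : (E.card : ℝ) * (G * εT * (1 - (2:ℝ)^x))
          = ((E.card : ℝ) - (E.card : ℝ) * (2:ℝ)^x) * (G * εT) := by ring
      rw [this]
      apply mul_le_mul_of_nonneg_right _ hGε
      linarith [h2Tn]
    exact le_of_mul_le_mul_left h2 hnpos
  -- build the loss sequence
  refine ⟨gv ε₀, ?_, ?_, ?_⟩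
  · intro t
    simp only [hgv]
    unfold signVec
    cases ε₀ t <;> simp
  · -- quadratic lower bound
    have hmem : q * frobNorm B ≤
        ∑ i : Fin T, ∑ j : Fin T, signVec ε₀ i * signVec ε₀ j * B i j := by
      have := hε₀E
      rw [hE, Finset.mem_filter] at this
      exact this.2
    have hAij : ∀ i j, A i j = B i j + (if i = j then A i i else 0) := by
      intro i j
      rw [hB]
      simp [Matrix.sub_apply, Matrix.diagonal_apply]
    have key : ∀ i, ∑ j : Fin T, signVec ε₀ i * signVec ε₀ j * A i j
        = A i i + ∑ j : Fin T, signVec ε₀ i * signVec ε₀ j * B i j := by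
      intro i
      have hterm : ∀ j, signVec ε₀ i * signVec ε₀ j * A i j
          = signVec ε₀ i * signVec ε₀ j * B i j + (if j = i then A i i else 0) := by
        intro j
        by_cases h : j = i
        · have hs : signVec ε₀ i * signVec ε₀ i = 1 := by
            rw [← pow_two]; exact hsq ε₀ i
          rw [h, hBdiag i, if_pos rfl, hs]
          ring
        · rw [hAij i j, if_neg (fun hh => h hh.symm), if_neg h]
          ring
      rw [Finset.sum_congr rfl (fun j _ => hterm j), Finset.sum_add_distrib,
        Finset.sum_ite_eq' Finset.univ i (fun _ => A i i)]
      simp only [Finset.mem_univ, if_true]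
      ring
    have hAsum : ∑ i : Fin T, ∑ j : Fin T, signVec ε₀ i * signVec ε₀ j * A i j
        = A.trace + ∑ i : Fin T, ∑ j : Fin T, signVec ε₀ i * signVec ε₀ j * B i j := by
      rw [Finset.sum_congr rfl (fun i _ => key i), Finset.sum_add_distrib]
      congr 1
    have hquad : gv ε₀ ⬝ᵥ (A *ᵥ gv ε₀)
        = G^2 * (A.trace + ∑ i : Fin T, ∑ j : Fin T,
            signVec ε₀ i * signVec ε₀ j * B i j) := by
      calc gv ε₀ ⬝ᵥ (A *ᵥ gv ε₀)
          = ∑ i : Fin T, ∑ j : Fin T, G^2 * (signVec ε₀ i * signVec ε₀ j * A i j) := by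
            simp only [dotProduct, Matrix.mulVec, hgv]
            refine Finset.sum_congr rfl fun i _ => ?_
            rw [Finset.mul_sum]
            exact Finset.sum_congr rfl fun j _ => by ring
        _ = G^2 * ∑ i : Fin T, ∑ j : Fin T, signVec ε₀ i * signVec ε₀ j * A i j := by
            rw [Finset.mul_sum]
            exact Finset.sum_congr rfl fun i _ => (Finset.mul_sum _ _ _).symm
        _ = _ := by rw [hAsum]
    rw [hquad]
    exact mul_le_mul_of_nonneg_left (add_le_add_right hmem A.trace) (sq_nonneg G)
  · exact hSlb
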